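/- (Lemma 3.3, surface case k = d−1.) There is a constant c > 0 such that for every closed set B ⊆ ℝ^d and every ε ∈ (0,R), H^{d−1}(∂F_ε ∩ B) ≤ c · #Ω(B,ε) · ε^{d−1}, where Ω(B,ε) := {ω ∈ Σ(ε) : (S_ω F)_ε ∩ B ≠ ∅} and #Ω(B,ε) is its cardinality. -/

import Mathlib

open MeasureTheory Filter Metric Set

/-- For a word `ω = ω₁…ωₙ`, the product `r_ω = r_{ω₁} ⋯ r_{ωₙ}` of contraction
ratios (`r_∅ = 1`). -/
def wordRatio {N : ℕ} (r : Fin N → ℝ) (ω : List (Fin N)) : ℝ := (ω.map r).prod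

/-- For a word `ω = ω₁…ωₙ`, the composed map `S_ω = S_{ω₁} ∘ ⋯ ∘ S_{ωₙ}`
(`S_∅ = id`). -/
def wordMap {N : ℕ} {E : Type*} (S : Fin N → E → E) (ω : List (Fin N)) : E → E :=
  ω.foldr (fun i g => S i ∘ g) id

/-- The family `Σ(ε)` of all words `ω = ω₁…ωₙ`, `n ≥ 1`, with
`R r_ω < ε ≤ R r_{ω₁…ω_{n-1}}`. -/
def sigmaWords {N : ℕ} (r : Fin N → ℝ) (R ε : ℝ) : Set (List (Fin N)) :=
  {ω | ω ≠ [] ∧ R * wordRatio r ω < ε ∧ ε ≤ R * wordRatio r ω.dropLast}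


open scoped ENNReal NNReal
open RealInnerProductSpace Module

section words
variable {N : ℕ} {E : Type*} [MetricSpace E] (r : Fin N → ℝ) (S : Fin N → E → E)

lemma wordRatio_nil : wordRatio r ([] : List (Fin N)) = 1 := by simp [wordRatio]

lemma wordRatio_cons (i : Fin N) (ω : List (Fin N)) :
    wordRatio r (i :: ω) = r i * wordRatio r ω := by simp [wordRatio]

lemma wordRatio_pos (hr : ∀ i, 0 < r i) (ω : List (Fin N)) : 0 < wordRatio r ω := by
  induction ω with
  | nil => simp [wordRatio_nil]
  | cons i ω ih => rw [wordRatio_cons]; exact mul_pos (hr i) ih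

lemma wordRatio_le_pow {ρ : ℝ} (hr : ∀ i, 0 < r i) (hρ : ∀ i, r i ≤ ρ) (hρ1 : 0 < ρ)
    (ω : List (Fin N)) : wordRatio r ω ≤ ρ ^ ω.length := by
  induction ω with
  | nil => simp [wordRatio_nil]
  | cons i ω ih =>
    rw [wordRatio_cons]
    calc r i * wordRatio r ω ≤ ρ * ρ ^ ω.length := by
          apply mul_le_mul (hρ i) ih (wordRatio_pos r hr ω).le hρ1.le
      _ = ρ ^ (i :: ω).length := by rw [List.length_cons, pow_succ']

lemma wordMap_nil : wordMap S ([] : List (Fin N)) = id := rfl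

lemma wordMap_cons (i : Fin N) (ω : List (Fin N)) :
    wordMap S (i :: ω) = S i ∘ wordMap S ω := rfl

lemma wordMap_dist (hS : ∀ i x y, dist (S i x) (S i y) = r i * dist x y)
    (ω : List (Fin N)) (x y : E) :
    dist (wordMap S ω x) (wordMap S ω y) = wordRatio r ω * dist x y := by
  induction ω with
  | nil => simp [wordMap_nil, wordRatio_nil]
  | cons i ω ih =>
    rw [wordMap_cons, wordRatio_cons]
    simp only [Function.comp_apply, hS, ih, mul_assoc]

lemma wordMap_image_subset {F : Set E} (hFinv : F = ⋃ i, S i '' F) (ω : List (Fin N)) :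
    wordMap S ω '' F ⊆ F := by
  induction ω with
  | nil => simp [wordMap_nil]
  | cons i ω ih =>
    rw [wordMap_cons, Set.image_comp]
    have h1 : S i '' (wordMap S ω '' F) ⊆ S i '' F := Set.image_mono ih
    refine h1.trans ?_
    conv_rhs => rw [hFinv]
    exact Set.subset_iUnion (fun j => S j '' F) i

/-- Decomposition of `F` at scale `ε`. -/
lemma decomp {F : Set E} (hFinv : F = ⋃ i, S i '' F)
    (hr : ∀ i, r i ∈ Set.Ioo (0:ℝ) 1) (hS : ∀ i x y, dist (S i x) (S i y) = r i * dist x y)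
    {R : ℝ} (hR : 0 < R) :
    ∀ ε : ℝ, 0 < ε → ε ≤ R → ∀ x ∈ F, ∃ ω ∈ sigmaWords r R ε, x ∈ wordMap S ω '' F := by
  obtain ⟨ρ, hρ0, hρ1, hρ⟩ : ∃ ρ : ℝ, 0 < ρ ∧ ρ < 1 ∧ ∀ i, r i ≤ ρ := by
    rcases isEmpty_or_nonempty (Fin N) with h | h
    · exact ⟨1/2, by norm_num, by norm_num, fun i => isEmptyElim i⟩
    · obtain ⟨i₀, hi₀⟩ := Finite.exists_max r
      exact ⟨r i₀, (hr i₀).1, (hr i₀).2, hi₀⟩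
  have main : ∀ n : ℕ, ∀ ε : ℝ, 0 < ε → ε ≤ R → R * ρ ^ n < ε →
      ∀ x ∈ F, ∃ ω ∈ sigmaWords r R ε, x ∈ wordMap S ω '' F := by
    intro n
    induction n with
    | zero =>
      intro ε hε hεR hlt
      simp only [pow_zero, mul_one] at hlt
      exact absurd hεR (not_le.mpr hlt)
    | succ n ih =>
      intro ε hε hεR hlt x hx
      rw [hFinv] at hx
      obtain ⟨i, y, hy, hxy⟩ := by simpa using hx
      by_cases hcase : R * r i < ε
      · refine ⟨[i], ⟨by simp, ?_, ?_⟩, ?_⟩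
        · simpa [wordRatio_cons, wordRatio_nil] using hcase
        · simpa [wordRatio_nil] using hεR
        · exact ⟨y, hy, by simpa [wordMap_cons, wordMap_nil] using hxy⟩
      · push_neg at hcase
        have hri := hr i
        have hε' : 0 < ε / r i := div_pos hε hri.1
        have hεR' : ε / r i ≤ R := by
          rw [div_le_iff₀ hri.1]; linarith [hcase, mul_comm R (r i)]
        have hlt' : R * ρ ^ n < ε / r i := by
          rw [lt_div_iff₀ hri.1]
          calc R * ρ ^ n * r i ≤ R * ρ ^ n * ρ := by
                apply mul_le_mul_of_nonneg_left (hρ i)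
                positivity
            _ = R * ρ ^ (n+1) := by ring
            _ < ε := hlt
        obtain ⟨ω, ⟨hω0, hω1, hω2⟩, z, hz, hωz⟩ := ih (ε / r i) hε' hεR' hlt' y hy
        refine ⟨i :: ω, ⟨by simp, ?_, ?_⟩, ?_⟩
        · rw [wordRatio_cons]
          calc R * (r i * wordRatio r ω) = r i * (R * wordRatio r ω) := by ring
            _ < r i * (ε / r i) := by exact (mul_lt_mul_iff_right₀ hri.1).mpr hω1
            _ = ε := by rw [mul_div_cancel₀ _ (ne_of_gt hri.1)]
        · rw [List.dropLast_cons_of_ne_nil hω0, wordRatio_cons]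
          calc ε = r i * (ε / r i) := by rw [mul_div_cancel₀ _ (ne_of_gt hri.1)]
            _ ≤ r i * (R * wordRatio r ω.dropLast) := by
                exact mul_le_mul_of_nonneg_left hω2 hri.1.le
            _ = R * (r i * wordRatio r ω.dropLast) := by ring
        · exact ⟨z, hz, by rw [wordMap_cons]; simp [hωz, hxy]⟩
  intro ε hε hεR
  obtain ⟨n, hn⟩ := exists_pow_lt_of_lt_one (div_pos hε hR) hρ1
  have : R * ρ ^ n < ε := by
    rw [mul_comm, ← lt_div_iff₀ hR]; exact hn
  exact main n ε hε hεR this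

lemma sigmaWords_finite (hr : ∀ i, r i ∈ Set.Ioo (0:ℝ) 1) {R ε : ℝ} (hR : 0 < R) (hε : 0 < ε) :
    (sigmaWords r R ε).Finite := by
  obtain ⟨ρ, hρ0, hρ1, hρ⟩ : ∃ ρ : ℝ, 0 < ρ ∧ ρ < 1 ∧ ∀ i, r i ≤ ρ := by
    rcases isEmpty_or_nonempty (Fin N) with h | h
    · exact ⟨1/2, by norm_num, by norm_num, fun i => isEmptyElim i⟩
    · obtain ⟨i₀, hi₀⟩ := Finite.exists_max r
      exact ⟨r i₀, (hr i₀).1, (hr i₀).2, hi₀⟩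
  obtain ⟨n, hn⟩ := exists_pow_lt_of_lt_one (div_pos hε hR) hρ1
  apply Set.Finite.subset (List.finite_length_le (Fin N) (n + 1))
  rintro ω ⟨hω0, -, hω2⟩
  simp only [Set.mem_setOf_eq]
  by_contra hlen
  push_neg at hlen
  have h1 : wordRatio r ω.dropLast ≤ ρ ^ ω.dropLast.length :=
    wordRatio_le_pow r (fun i => (hr i).1) hρ hρ0 _
  have h2 : ω.dropLast.length = ω.length - 1 := by simp [List.length_dropLast]
  have h3 : n ≤ ω.length - 1 := by omega
  have h4 : ρ ^ ω.dropLast.length ≤ ρ ^ n := by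
    rw [h2]; exact pow_le_pow_of_le_one hρ0.le hρ1.le h3
  have : ε ≤ R * ρ ^ n := by
    calc ε ≤ R * wordRatio r ω.dropLast := hω2
      _ ≤ R * ρ ^ n := by
          apply mul_le_mul_of_nonneg_left (h1.trans h4) hR.le
  have : ε / R ≤ ρ ^ n := by rwa [div_le_iff₀ hR, mul_comm]
  linarith [hn]

end words


section pieces
variable {H : Type*} [NormedAddCommGroup H] [InnerProductSpace ℝ H]

/-- Pythagoras for the projection `x ↦ x - ⟪x,e⟫e`. -/
lemma proj_pythagoras (e : H) (he : ‖e‖ = 1) (x y : H) :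
    ‖x - y‖^2 = ‖(x - ⟪x, e⟫ • e) - (y - ⟪y, e⟫ • e)‖^2 + ⟪x - y, e⟫^2 := by
  set u := x - y with hu
  set t := ⟪u, e⟫ with ht
  have h1 : (x - ⟪x, e⟫ • e) - (y - ⟪y, e⟫ • e) = u - t • e := by
    rw [ht, hu, inner_sub_left, sub_smul]
    abel
  have h2 : ⟪u - t • e, t • e⟫ = 0 := by
    rw [inner_smul_right, inner_sub_left, inner_smul_left]
    have : ⟪e, e⟫ = 1 := by
      rw [real_inner_self_eq_norm_sq, he]; norm_num
    simp [this, he, ht]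
  have h3 : ‖u‖^2 = ‖(u - t • e) + t • e‖^2 := by rw [sub_add_cancel]
  rw [h1, h3, norm_add_sq_real, h2]
  have : ‖t • e‖^2 = t^2 := by
    rw [norm_smul, he, mul_one, Real.norm_eq_abs, sq_abs]
  rw [this]; ring

lemma proj_contract (e : H) (he : ‖e‖ = 1) (x y : H) :
    ‖(x - ⟪x, e⟫ • e) - (y - ⟪y, e⟫ • e)‖ ≤ ‖x - y‖ := by
  have h := proj_pythagoras e he x y
  nlinarith [norm_nonneg ((x - ⟪x, e⟫ • e) - (y - ⟪y, e⟫ • e)), norm_nonneg (x - y),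
    sq_nonneg (⟪x - y, e⟫)]

lemma proj_expand (e : H) (he : ‖e‖ = 1) (x y : H)
    (hkey : |⟪x - y, e⟫| ≤ (9/32) * ‖x - y‖) :
    ‖x - y‖ ≤ 2 * ‖(x - ⟪x, e⟫ • e) - (y - ⟪y, e⟫ • e)‖ := by
  have h := proj_pythagoras e he x y
  have h2 : ⟪x - y, e⟫^2 ≤ (81/1024) * ‖x - y‖^2 := by
    have := abs_nonneg (⟪x - y, e⟫)
    nlinarith [sq_abs (⟪x - y, e⟫), norm_nonneg (x - y)]
  nlinarith [norm_nonneg ((x - ⟪x, e⟫ • e) - (y - ⟪y, e⟫ • e)), norm_nonneg (x - y)]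

end pieces

section key
variable {H : Type*} [NormedAddCommGroup H] [InnerProductSpace ℝ H]
open RealInnerProductSpace

lemma key_inner {ε : ℝ} (hε : 0 < ε) (x y a e : H)
    (hax : ‖x - a‖ = ε) (hya : ε ≤ ‖y - a‖) (hxy : ‖y - x‖ ≤ ε/16)
    (he : ‖ε⁻¹ • (x - a) - e‖ ≤ 1/4) :
    -((9/32) * ‖y - x‖) ≤ ⟪y - x, e⟫ := by
  have h0 : ‖y - a‖^2 = ‖y - x‖^2 + 2 * ⟪y - x, x - a⟫ + ‖x - a‖^2 := by
    have : y - a = (y - x) + (x - a) := by abel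
    rw [this, norm_add_sq_real]
  have h1 : ⟪y - x, x - a⟫ ≥ -(‖y - x‖^2 / 2) := by
    have hsq : ‖x - a‖^2 ≤ ‖y - a‖^2 := by
      apply pow_le_pow_left₀ (norm_nonneg _) ?_ 2
      rw [hax]; exact hya
    nlinarith
  have h2 : ⟪y - x, ε⁻¹ • (x - a)⟫ ≥ -(‖y - x‖ / 32) := by
    rw [real_inner_smul_right]
    have hb : ε⁻¹ * ‖y - x‖ ≤ 1/16 := by
      rw [inv_mul_le_iff₀ hε]
      linarith
    have hn : 0 ≤ ‖y - x‖ := norm_nonneg _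
    calc ε⁻¹ * ⟪y - x, x - a⟫ ≥ ε⁻¹ * (-(‖y - x‖^2 / 2)) := by
          apply mul_le_mul_of_nonneg_left h1 (by positivity)
      _ = -(ε⁻¹ * ‖y - x‖ * ‖y - x‖ / 2) := by ring
      _ ≥ -(‖y - x‖ / 32) := by nlinarith
  have h3 : |⟪y - x, ε⁻¹ • (x - a) - e⟫| ≤ ‖y - x‖ * (1/4) := by
    calc |⟪y - x, ε⁻¹ • (x - a) - e⟫| ≤ ‖y - x‖ * ‖ε⁻¹ • (x - a) - e‖ :=
          abs_real_inner_le_norm _ _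
      _ ≤ ‖y - x‖ * (1/4) := by
          apply mul_le_mul_of_nonneg_left he (norm_nonneg _)
  have h4 : ⟪y - x, e⟫ = ⟪y - x, ε⁻¹ • (x - a)⟫ - ⟪y - x, ε⁻¹ • (x - a) - e⟫ := by
    rw [inner_sub_right]; ring
  have h5 := abs_le.mp h3
  rw [h4]
  nlinarith [h2, h5.2]

end key


lemma piece_measure (d : ℕ) (hd : 1 ≤ d) :
    ∃ C : ℝ≥0∞, C ≠ ⊤ ∧ ∀ (e : EuclideanSpace ℝ (Fin d)), ‖e‖ = 1 →
      ∀ (A : Set (EuclideanSpace ℝ (Fin d))),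
      (∀ x ∈ A, ∀ y ∈ A, |⟪x - y, e⟫| ≤ (9/32) * ‖x - y‖) →
      ∀ (s : ℝ), 0 ≤ s → ∀ (x₀ : EuclideanSpace ℝ (Fin d)), (∀ x ∈ A, ‖x - x₀‖ ≤ s) →
      μH[((d:ℝ)-1)] A ≤ C * ENNReal.ofReal ((2*s)^(d-1)) := by
  classical
  have hm0 : (0:ℝ) ≤ (d:ℝ) - 1 := by
    have : (1:ℝ) ≤ (d:ℝ) := by exact_mod_cast hd
    linarith
  set K₁ : ℝ≥0 := ((d - 1 : ℕ) : ℝ≥0) ^ (1 / (2:ℝ≥0∞)).toReal with hK₁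
  refine ⟨((2:ℝ≥0):ℝ≥0∞)^((d:ℝ)-1) * (K₁ : ℝ≥0∞)^((d:ℝ)-1), ?_, ?_⟩
  · exact ENNReal.mul_ne_top (ENNReal.rpow_ne_top_of_nonneg hm0 ENNReal.coe_ne_top)
      (ENNReal.rpow_ne_top_of_nonneg hm0 ENNReal.coe_ne_top)
  intro e he A key s hs x₀ hA
  have hed : e ≠ 0 := by
    intro h; rw [h, norm_zero] at he; norm_num at he
  set W := (ℝ ∙ e)ᗮ with hWdef
  have hm' : finrank ℝ W = d - 1 := by
    have h1 : finrank ℝ (ℝ ∙ e) = 1 := finrank_span_singleton hed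
    have h3 : finrank ℝ (EuclideanSpace ℝ (Fin d)) = d := finrank_euclideanSpace_fin
    have h2 := Submodule.finrank_add_finrank_orthogonal (K := (ℝ ∙ e))
    rw [h1, h3] at h2
    rw [hWdef]
    omega
  -- the projection onto W
  have hmem : ∀ x : EuclideanSpace ℝ (Fin d), x - ⟪x, e⟫ • e ∈ W := by
    intro x
    rw [hWdef, Submodule.mem_orthogonal_singleton_iff_inner_right]
    rw [inner_sub_right, real_inner_smul_right, real_inner_self_eq_norm_sq, he]
    rw [real_inner_comm]
    ring
  set π : EuclideanSpace ℝ (Fin d) → W := fun x => ⟨x - ⟪x, e⟫ • e, hmem x⟩ with hπ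
  have hπdist : ∀ x y, dist (π x) (π y) = ‖(x - ⟪x, e⟫ • e) - (y - ⟪y, e⟫ • e)‖ := by
    intro x y
    rw [Subtype.dist_eq, dist_eq_norm]
  -- the height function
  set f : W → ℝ := fun p => if h : ∃ x, x ∈ A ∧ π x = p then ⟪Classical.choose h, e⟫ else 0
    with hf
  have hexpand : ∀ x ∈ A, ∀ y ∈ A, ‖x - y‖ ≤ 2 * dist (π x) (π y) := by
    intro x hx y hy
    rw [hπdist]
    exact proj_expand e he x y (key x hx y hy)
  have hwd : ∀ x ∈ A, f (π x) = ⟪x, e⟫ := by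
    intro x hx
    have hex : ∃ x', x' ∈ A ∧ π x' = π x := ⟨x, hx, rfl⟩
    rw [hf]
    simp only
    rw [dif_pos hex]
    obtain ⟨hx'A, hx'eq⟩ := Classical.choose_spec hex
    set x' := Classical.choose hex
    have : x' = x := by
      have h1 : dist (π x') (π x) = 0 := by rw [hx'eq, dist_self]
      have h2 := hexpand x' hx'A x hx
      rw [h1] at h2
      have : ‖x' - x‖ ≤ 0 := by linarith
      have : x' - x = 0 := by
        rw [← norm_le_zero_iff]; exact this
      exact sub_eq_zero.mp this
    rw [this]
  have hlip : LipschitzOnWith 1 f (π '' A) := by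
    rw [lipschitzOnWith_iff_dist_le_mul]
    rintro p ⟨x, hx, rfl⟩ q ⟨y, hy, rfl⟩
    rw [hwd x hx, hwd y hy, Real.dist_eq, ← inner_sub_left]
    calc |⟪x - y, e⟫| ≤ (9/32) * ‖x - y‖ := key x hx y hy
      _ ≤ (9/32) * (2 * dist (π x) (π y)) := by
          apply mul_le_mul_of_nonneg_left (hexpand x hx y hy) (by norm_num)
      _ ≤ 1 * dist (π x) (π y) := by
          have := dist_nonneg (x := π x) (y := π y)
          push_cast
          linarith
  obtain ⟨g, hg, hgeq⟩ := hlip.extend_real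
  set g' : W → EuclideanSpace ℝ (Fin d) := fun p => (p : EuclideanSpace ℝ (Fin d)) + g p • e
    with hg'def
  have hg' : LipschitzWith 2 g' := by
    apply LipschitzWith.of_dist_le_mul
    intro p q
    have h1 : g' p - g' q = ((p : EuclideanSpace ℝ (Fin d)) - q) + (g p - g q) • e := by
      rw [hg'def]; simp only; rw [sub_smul]; abel
    rw [dist_eq_norm, h1]
    calc ‖((p : EuclideanSpace ℝ (Fin d)) - q) + (g p - g q) • e‖
        ≤ ‖(p : EuclideanSpace ℝ (Fin d)) - q‖ + ‖(g p - g q) • e‖ := norm_add_le _ _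
      _ = dist p q + |g p - g q| := by
          rw [norm_smul, he, mul_one, Real.norm_eq_abs, Subtype.dist_eq, dist_eq_norm]
      _ ≤ dist p q + dist p q := by
          have := hg.dist_le_mul p q
          rw [Real.dist_eq] at this
          push_cast at this
          linarith
      _ = 2 * dist p q := by ring
  have hsub : A ⊆ g' '' (π '' A) := by
    intro x hx
    refine ⟨π x, Set.mem_image_of_mem _ hx, ?_⟩
    have h1 : g (π x) = f (π x) := (hgeq (Set.mem_image_of_mem _ hx)).symm
    rw [hg'def]
    simp only
    rw [h1, hwd x hx]
    show x - ⟪x, e⟫ • e + ⟪x, e⟫ • e = x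
    abel
  -- the isometry to the standard space
  set φ := (stdOrthonormalBasis ℝ W).repr with hφ
  set m' := finrank ℝ W with hm'def
  set ψ := WithLp.equiv 2 (Fin m' → ℝ) with hψ
  have hψlip : LipschitzWith 1 ψ := PiLp.lipschitzWith_ofLp 2 _
  have hψsymm : LipschitzWith ((Fintype.card (Fin m') : ℝ≥0) ^ (1 / (2:ℝ≥0∞)).toReal) ψ.symm :=
    PiLp.lipschitzWith_toLp 2 _
  -- chain of estimates
  have step1 : μH[((d:ℝ)-1)] A ≤ μH[((d:ℝ)-1)] (g' '' (π '' A)) := measure_mono hsub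
  have step2 : μH[((d:ℝ)-1)] (g' '' (π '' A)) ≤
      ((2:ℝ≥0):ℝ≥0∞)^((d:ℝ)-1) * μH[((d:ℝ)-1)] (π '' A) :=
    hg'.hausdorffMeasure_image_le hm0 _
  have step3 : μH[((d:ℝ)-1)] (π '' A) ≤ μH[((d:ℝ)-1)] (φ '' (π '' A)) := by
    have h2 := (φ.symm.isometry.lipschitz).hausdorffMeasure_image_le hm0 (φ '' (π '' A))
    simp only [ENNReal.coe_one, ENNReal.one_rpow, one_mul] at h2
    refine le_trans (le_of_eq ?_) h2
    rw [← Set.image_comp]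
    simp
  have step4 : μH[((d:ℝ)-1)] (φ '' (π '' A)) ≤
      (((Fintype.card (Fin m') : ℝ≥0) ^ (1 / (2:ℝ≥0∞)).toReal : ℝ≥0) : ℝ≥0∞)^((d:ℝ)-1) *
        μH[((d:ℝ)-1)] (ψ '' (φ '' (π '' A))) := by
    refine le_trans (le_of_eq ?_) (hψsymm.hausdorffMeasure_image_le hm0 _)
    rw [← Set.image_comp]
    simp
  have step5 : ψ '' (φ '' (π '' A)) ⊆ Metric.closedBall (ψ (φ (π x₀))) s := by
    rintro a ⟨b, ⟨p, ⟨x, hx, rfl⟩, rfl⟩, rfl⟩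
    rw [Metric.mem_closedBall]
    calc dist (ψ (φ (π x))) (ψ (φ (π x₀))) ≤ 1 * dist (φ (π x)) (φ (π x₀)) :=
          hψlip.dist_le_mul _ _
      _ = dist (π x) (π x₀) := by rw [one_mul, φ.isometry.dist_eq]
      _ ≤ ‖x - x₀‖ := by rw [hπdist]; exact proj_contract e he x x₀
      _ ≤ s := hA x hx
  have hexp : ((d:ℝ) - 1) = (Fintype.card (Fin m') : ℝ) := by
    rw [Fintype.card_fin, hm', Nat.cast_sub hd, Nat.cast_one]
  have step6 : μH[((d:ℝ)-1)] (ψ '' (φ '' (π '' A))) ≤ ENNReal.ofReal ((2*s)^(d-1)) := by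
    calc μH[((d:ℝ)-1)] (ψ '' (φ '' (π '' A))) ≤
        μH[((d:ℝ)-1)] (Metric.closedBall (ψ (φ (π x₀))) s) := measure_mono step5
      _ = volume (Metric.closedBall (ψ (φ (π x₀))) s) := by
          rw [hexp]
          rw [hausdorffMeasure_pi_real]
      _ = ENNReal.ofReal ((2*s)^(Fintype.card (Fin m'))) := Real.volume_pi_closedBall _ hs
      _ = ENNReal.ofReal ((2*s)^(d-1)) := by rw [Fintype.card_fin, hm']
  have hcard : ((Fintype.card (Fin m') : ℝ≥0) ^ (1 / (2:ℝ≥0∞)).toReal : ℝ≥0) = K₁ := by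
    rw [Fintype.card_fin, hm', hK₁]
  calc μH[((d:ℝ)-1)] A ≤ ((2:ℝ≥0):ℝ≥0∞)^((d:ℝ)-1) * μH[((d:ℝ)-1)] (π '' A) :=
        step1.trans step2
    _ ≤ ((2:ℝ≥0):ℝ≥0∞)^((d:ℝ)-1) * ((K₁ : ℝ≥0∞)^((d:ℝ)-1) *
          ENNReal.ofReal ((2*s)^(d-1))) := by
        apply mul_le_mul_right ?_
        rw [← hcard]
        exact step3.trans (step4.trans (mul_le_mul_right step6 _))
    _ = ((2:ℝ≥0):ℝ≥0∞)^((d:ℝ)-1) * (K₁ : ℝ≥0∞)^((d:ℝ)-1) * ENNReal.ofReal ((2*s)^(d-1)) := by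
        ring


lemma surface_ball_estimate (d : ℕ) (hd : 1 ≤ d)
    (K : Set (EuclideanSpace ℝ (Fin d))) (hKc : IsCompact K) (hKne : K.Nonempty)
    (ρ : ℝ) (hρ : 1 ≤ ρ) :
    ∃ C : ℝ≥0∞, C ≠ ⊤ ∧ ∀ ε : ℝ, 0 < ε → ∀ z : EuclideanSpace ℝ (Fin d),
      μH[((d:ℝ)-1)] ({x | infDist x K = ε} ∩ closedBall z (ρ*ε)) ≤
        C * ENNReal.ofReal (ε^(d-1)) := by
  classical
  obtain ⟨C₀, hC₀top, hC₀⟩ := piece_measure d hd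
  obtain ⟨T, hT1, hT2⟩ := (isCompact_sphere (0 : EuclideanSpace ℝ (Fin d)) 1).elim_nhds_subcover
    (fun v => ball v (1/4)) (fun x _ => ball_mem_nhds x (by norm_num))
  obtain ⟨P, hP1, hP2⟩ := (isCompact_closedBall (0 : EuclideanSpace ℝ (Fin d)) ρ).elim_nhds_subcover
    (fun v => ball v (1/32)) (fun x _ => ball_mem_nhds x (by norm_num))
  refine ⟨(T.card * P.card : ℕ) * (C₀ * ENNReal.ofReal ((1/8:ℝ)^(d-1))), ?_, ?_⟩
  · exact ENNReal.mul_ne_top (ENNReal.natCast_ne_top _)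
      (ENNReal.mul_ne_top hC₀top ENNReal.ofReal_ne_top)
  intro ε hε z
  have hεne : ε ≠ 0 := ne_of_gt hε
  -- nearest point map
  choose a ha1 ha2 using fun x => hKc.exists_infDist_eq_dist hKne x
  set L := {x | infDist x K = ε} ∩ closedBall z (ρ*ε) with hL
  set v : EuclideanSpace ℝ (Fin d) → EuclideanSpace ℝ (Fin d) :=
    fun x => ε⁻¹ • (x - a x) with hv
  have hax : ∀ x ∈ L, ‖x - a x‖ = ε := by
    intro x hx
    rw [← dist_eq_norm, ← ha2 x]
    exact hx.1
  have hvnorm : ∀ x ∈ L, ‖v x‖ = 1 := by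
    intro x hx
    rw [hv]
    simp only
    rw [norm_smul, Real.norm_eq_abs, abs_inv, abs_of_pos hε, hax x hx]
    field_simp
  set Ap : EuclideanSpace ℝ (Fin d) → EuclideanSpace ℝ (Fin d) →
      Set (EuclideanSpace ℝ (Fin d)) :=
    fun e p => {x ∈ L | dist x (z + ε • p) ≤ ε/32 ∧ ‖v x - e‖ ≤ 1/4} with hAp
  have hcover : L ⊆ ⋃ q ∈ T ×ˢ P, Ap q.1 q.2 := by
    intro x hx
    have h1 : v x ∈ Metric.sphere (0 : EuclideanSpace ℝ (Fin d)) 1 := by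
      rw [mem_sphere_zero_iff_norm]
      exact hvnorm x hx
    obtain ⟨e, heT, hei⟩ := Set.mem_iUnion₂.mp (hT2 h1)
    have h2 : ε⁻¹ • (x - z) ∈ Metric.closedBall (0 : EuclideanSpace ℝ (Fin d)) ρ := by
      rw [mem_closedBall_zero_iff, norm_smul, Real.norm_eq_abs, abs_inv, abs_of_pos hε]
      rw [inv_mul_le_iff₀ hε]
      have := hx.2
      rw [mem_closedBall, dist_eq_norm] at this
      calc ‖x - z‖ ≤ ρ * ε := this
        _ = ε * ρ := by ring
    obtain ⟨p, hpP, hpi⟩ := Set.mem_iUnion₂.mp (hP2 h2)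
    refine Set.mem_iUnion₂.mpr ⟨(e, p), Finset.mem_product.mpr ⟨heT, hpP⟩, ?_⟩
    refine ⟨hx, ?_, ?_⟩
    · have h3 : x - (z + ε • p) = ε • (ε⁻¹ • (x - z) - p) := by
        rw [smul_sub, smul_inv_smul₀ hεne]
        abel
      rw [dist_eq_norm, h3, norm_smul, Real.norm_eq_abs, abs_of_pos hε]
      have h4 : ‖ε⁻¹ • (x - z) - p‖ < 1/32 := by
        rw [← dist_eq_norm]
        exact mem_ball.mp hpi
      calc ε * ‖ε⁻¹ • (x - z) - p‖ ≤ ε * (1/32) := by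
            apply mul_le_mul_of_nonneg_left h4.le hε.le
        _ = ε/32 := by ring
    · rw [← dist_eq_norm]
      exact (mem_ball.mp hei).le
  -- each piece
  have hpiece : ∀ q ∈ T ×ˢ P, μH[((d:ℝ)-1)] (Ap q.1 q.2) ≤
      C₀ * ENNReal.ofReal ((2*(ε/16))^(d-1)) := by
    rintro ⟨e, p⟩ hq
    have heT : e ∈ T := (Finset.mem_product.mp hq).1
    have he1 : ‖e‖ = 1 := by
      have := hT1 e heT
      rwa [mem_sphere_zero_iff_norm] at this
    have hball : ∀ x ∈ Ap e p, ‖x - (z + ε • p)‖ ≤ ε/32 := by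
      rintro x ⟨hxL, hx1, hx2⟩
      rw [← dist_eq_norm]
      linarith
    have hdiff : ∀ x ∈ Ap e p, ∀ y ∈ Ap e p, ‖y - x‖ ≤ ε/16 := by
      intro x hx y hy
      have h1 := hball x hx
      have h2 := hball y hy
      calc ‖y - x‖ = ‖(y - (z + ε • p)) - (x - (z + ε • p))‖ := by
            congr 1; abel
        _ ≤ ‖y - (z + ε • p)‖ + ‖x - (z + ε • p)‖ := norm_sub_le _ _
        _ ≤ ε/16 := by linarith
    have hside : ∀ x ∈ Ap e p, ∀ y ∈ Ap e p, -((9/32) * ‖y - x‖) ≤ ⟪y - x, e⟫ := by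
      rintro x ⟨hxL, hx1, hx2⟩ y ⟨hyL, hy1, hy2⟩
      refine key_inner hε x y (a x) e (hax x hxL) ?_ (hdiff x ⟨hxL, hx1, hx2⟩ y ⟨hyL, hy1, hy2⟩) hx2
      rw [← dist_eq_norm, ← hyL.1]
      exact infDist_le_dist_of_mem (ha1 x)
    have hkey : ∀ x ∈ Ap e p, ∀ y ∈ Ap e p, |⟪x - y, e⟫| ≤ (9/32) * ‖x - y‖ := by
      intro x hx y hy
      rw [abs_le]
      constructor
      · exact hside y hy x hx
      · have h1 := hside x hx y hy
        have h2 : ⟪x - y, e⟫ = -⟪y - x, e⟫ := by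
          rw [← inner_neg_left, neg_sub]
        have h3 : ‖x - y‖ = ‖y - x‖ := norm_sub_rev _ _
        rw [h2, h3]
        linarith
    have hA16 : ∀ x ∈ Ap e p, ‖x - (z + ε • p)‖ ≤ ε/16 := by
      intro x hx
      have := hball x hx
      linarith
    exact hC₀ e he1 (Ap e p) hkey (ε/16) (by positivity) (z + ε • p) hA16
  -- summation
  have h8 : (0:ℝ) ≤ (1/8:ℝ)^(d-1) := by positivity
  calc μH[((d:ℝ)-1)] L ≤ μH[((d:ℝ)-1)] (⋃ q ∈ T ×ˢ P, Ap q.1 q.2) := measure_mono hcover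
    _ ≤ ∑ q ∈ T ×ˢ P, μH[((d:ℝ)-1)] (Ap q.1 q.2) := measure_biUnion_finset_le _ _
    _ ≤ (T ×ˢ P).card • (C₀ * ENNReal.ofReal ((2*(ε/16))^(d-1))) :=
        Finset.sum_le_card_nsmul _ _ _ hpiece
    _ = ((T.card * P.card : ℕ) : ℝ≥0∞) * (C₀ * ENNReal.ofReal ((2*(ε/16))^(d-1))) := by
        rw [nsmul_eq_mul, Finset.card_product]
    _ = ((T.card * P.card : ℕ) : ℝ≥0∞) * (C₀ * ENNReal.ofReal ((1/8:ℝ)^(d-1))) *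
          ENNReal.ofReal (ε^(d-1)) := by
        have h1 : (2*(ε/16))^(d-1) = (1/8:ℝ)^(d-1) * ε^(d-1) := by
          rw [← mul_pow]; ring_nf
        rw [h1, ENNReal.ofReal_mul h8]
        ring


/-- Lemma 3.3 of Winter–Zähle, surface case `k = d-1`: for any closed `B`, the
surface area of `F_ε` inside `B` is bounded by `c ε^{d-1}` times the number of
words `ω ∈ Σ(ε)` whose cylinder neighborhood `(S_ω F)_ε` meets `B`. -/
theorem surface_localized_estimate
    (d N : ℕ) (hd : 1 ≤ d) (hN : 2 ≤ N)
    (S : Fin N → EuclideanSpace ℝ (Fin d) → EuclideanSpace ℝ (Fin d))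
    (r : Fin N → ℝ) (hr : ∀ i, r i ∈ Set.Ioo (0 : ℝ) 1)
    (hS : ∀ i x y, dist (S i x) (S i y) = r i * dist x y)
    (F : Set (EuclideanSpace ℝ (Fin d))) (hFne : F.Nonempty) (hFc : IsCompact F)
    (hFinv : F = ⋃ i, S i '' F)
    (hOSC : ∃ O : Set (EuclideanSpace ℝ (Fin d)), O.Nonempty ∧ IsOpen O ∧
      Bornology.IsBounded O ∧ (⋃ i, S i '' O) ⊆ O ∧
      ∀ i j, i ≠ j → Disjoint (S i '' O) (S j '' O))
    (D : ℝ) (hD : 0 < D) (hDd : D ≤ d) (hDsum : ∑ i, r i ^ D = 1)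
    (R : ℝ) (hR : Real.sqrt 2 * Metric.diam F < R) :
    ∃ c > (0 : ℝ), ∀ B : Set (EuclideanSpace ℝ (Fin d)), IsClosed B →
      ∀ ε ∈ Set.Ioo (0 : ℝ) R,
        μH[((d : ℝ) - 1)] (frontier (Metric.cthickening ε F) ∩ B) ≤
          ENNReal.ofReal (c *
            ({ω ∈ sigmaWords r R ε |
                (Metric.cthickening ε (wordMap S ω '' F) ∩ B).Nonempty}.ncard : ℝ) *
            ε ^ ((d : ℝ) - 1)) := by
  classical
  have hdiam0 : 0 ≤ Metric.diam F := Metric.diam_nonneg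
  have hR0 : 0 < R := by
    have h2 : (1:ℝ) ≤ Real.sqrt 2 := by
      rw [show (1:ℝ) = Real.sqrt 1 by simp]
      exact Real.sqrt_le_sqrt (by norm_num)
    nlinarith [Real.sq_sqrt (by norm_num : (2:ℝ) ≥ 0), Real.sqrt_nonneg 2]
  set ρ : ℝ := 1 + Metric.diam F / R with hρdef
  have hρ1 : 1 ≤ ρ := by
    rw [hρdef]
    have : 0 ≤ Metric.diam F / R := div_nonneg hdiam0 hR0.le
    linarith
  obtain ⟨C, hCtop, hC⟩ := surface_ball_estimate d hd F hFc hFne ρ hρ1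
  refine ⟨C.toReal + 1, by positivity, ?_⟩
  intro B hB ε hεmem
  obtain ⟨hε0, hεR⟩ := hεmem
  set Ω := {ω ∈ sigmaWords r R ε |
    (Metric.cthickening ε (wordMap S ω '' F) ∩ B).Nonempty} with hΩdef
  have hΩfin : Ω.Finite :=
    (sigmaWords_finite r hr hR0 hε0).subset (Set.sep_subset _ _)
  -- continuity of wordMaps, compactness of cylinders
  have hScont : ∀ i : Fin N, Continuous (S i) := by
    intro i
    apply LipschitzWith.continuous (K := Real.toNNReal (r i))
    apply LipschitzWith.of_dist_le_mul
    intro x y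
    rw [hS i x y, Real.coe_toNNReal _ (hr i).1.le]
  have hWcont : ∀ ω : List (Fin N), Continuous (wordMap S ω) := by
    intro ω
    induction ω with
    | nil => exact continuous_id
    | cons i ω ih => exact (hScont i).comp ih
  -- frontier is in the level set
  have hfront : ∀ x ∈ frontier (Metric.cthickening ε F), infDist x F = ε := by
    intro x hx
    have h1 := Metric.frontier_cthickening_subset F hx
    have h2 : infDist x F = (Metric.infEDist x F).toReal := rfl
    rw [h2, h1, ENNReal.toReal_ofReal hε0.le]
  -- the covering
  have hcover : frontier (Metric.cthickening ε F) ∩ B ⊆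
      ⋃ ω ∈ hΩfin.toFinset, (frontier (Metric.cthickening ε F) ∩
        Metric.cthickening ε (wordMap S ω '' F)) := by
    rintro x ⟨hxf, hxB⟩
    have hxd : infDist x F = ε := hfront x hxf
    obtain ⟨y, hyF, hyd⟩ := hFc.exists_infDist_eq_dist hFne x
    have hdxy : dist x y ≤ ε := by rw [← hyd, hxd]
    obtain ⟨ω, hω, hyω⟩ := decomp r S hFinv hr hS hR0 ε hε0 hεR.le y hyF
    have hxth : x ∈ Metric.cthickening ε (wordMap S ω '' F) :=
      Metric.mem_cthickening_of_dist_le x y ε _ hyω hdxy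
    have hωΩ : ω ∈ Ω := ⟨hω, ⟨x, hxth, hxB⟩⟩
    exact Set.mem_iUnion₂.mpr ⟨ω, hΩfin.mem_toFinset.mpr hωΩ, hxf, hxth⟩
  -- each piece is inside a ball around the cylinder
  have hpiece : ∀ ω ∈ hΩfin.toFinset,
      μH[((d:ℝ)-1)] (frontier (Metric.cthickening ε F) ∩
        Metric.cthickening ε (wordMap S ω '' F)) ≤ C * ENNReal.ofReal (ε^(d-1)) := by
    intro ω hω
    have hwSig : ω ∈ sigmaWords r R ε := (hΩfin.mem_toFinset.mp hω).1
    set z : EuclideanSpace ℝ (Fin d) := wordMap S ω hFne.some with hz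
    have hKω : IsCompact (wordMap S ω '' F) := hFc.image (hWcont ω)
    have hKωne : (wordMap S ω '' F).Nonempty := hFne.image _
    have hrω : wordRatio r ω ≤ ε / R := by
      have := hwSig.2.1
      rw [le_div_iff₀ hR0]
      linarith [this]
    have hrω0 : 0 ≤ wordRatio r ω := (wordRatio_pos r (fun i => (hr i).1) ω).le
    have hdiamω : Metric.diam (wordMap S ω '' F) ≤ wordRatio r ω * Metric.diam F := by
      apply Metric.diam_le_of_forall_dist_le (by positivity)
      rintro u ⟨a, ha, rfl⟩ v ⟨b, hb, rfl⟩
      rw [wordMap_dist r S hS ω a b]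
      exact mul_le_mul_of_nonneg_left (Metric.dist_le_diam_of_mem hFc.isBounded ha hb) hrω0
    have hsub : frontier (Metric.cthickening ε F) ∩
        Metric.cthickening ε (wordMap S ω '' F) ⊆
        {x | infDist x F = ε} ∩ closedBall z (ρ*ε) := by
      rintro x ⟨hxf, hxth⟩
      refine ⟨hfront x hxf, ?_⟩
      have h1 : infDist x (wordMap S ω '' F) ≤ ε := by
        have h2 := Metric.mem_cthickening_iff.mp hxth
        have h3 : infDist x (wordMap S ω '' F) = (EMetric.infEdist x (wordMap S ω '' F)).toReal :=
          rfl
        rw [h3]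
        calc (EMetric.infEdist x (wordMap S ω '' F)).toReal ≤ (ENNReal.ofReal ε).toReal :=
              ENNReal.toReal_mono ENNReal.ofReal_ne_top h2
          _ = ε := ENNReal.toReal_ofReal hε0.le
      obtain ⟨w, hw, hwd⟩ := hKω.exists_infDist_eq_dist hKωne x
      have hzw : z ∈ wordMap S ω '' F := ⟨hFne.some, hFne.some_mem, rfl⟩
      rw [mem_closedBall]
      calc dist x z ≤ dist x w + dist w z := dist_triangle _ _ _
        _ ≤ ε + wordRatio r ω * Metric.diam F := by
            apply add_le_add
            · rw [← hwd]; exact h1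
            · exact (Metric.dist_le_diam_of_mem hKω.isBounded hw hzw).trans hdiamω
        _ ≤ ε + (ε/R) * Metric.diam F := by
            apply add_le_add_right
            exact mul_le_mul_of_nonneg_right hrω hdiam0
        _ = ρ * ε := by rw [hρdef]; field_simp
    calc μH[((d:ℝ)-1)] (frontier (Metric.cthickening ε F) ∩
          Metric.cthickening ε (wordMap S ω '' F)) ≤
        μH[((d:ℝ)-1)] ({x | infDist x F = ε} ∩ closedBall z (ρ*ε)) := measure_mono hsub
      _ ≤ C * ENNReal.ofReal (ε^(d-1)) := hC ε hε0 z
  -- sum up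
  have hcard : (hΩfin.toFinset.card : ℝ) = (Ω.ncard : ℝ) := by
    rw [Set.ncard_eq_toFinset_card _ hΩfin]
  have hεpow : ε ^ ((d:ℝ) - 1) = ε ^ (d - 1 : ℕ) := by
    rw [← Real.rpow_natCast ε (d-1)]
    congr 1
    rw [Nat.cast_sub hd, Nat.cast_one]
  have hCle : C ≤ ENNReal.ofReal (C.toReal + 1) := by
    conv_lhs => rw [← ENNReal.ofReal_toReal hCtop]
    exact ENNReal.ofReal_le_ofReal (by linarith)
  calc μH[((d:ℝ)-1)] (frontier (Metric.cthickening ε F) ∩ B) ≤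
      μH[((d:ℝ)-1)] (⋃ ω ∈ hΩfin.toFinset, (frontier (Metric.cthickening ε F) ∩
        Metric.cthickening ε (wordMap S ω '' F))) := measure_mono hcover
    _ ≤ ∑ ω ∈ hΩfin.toFinset, μH[((d:ℝ)-1)] (frontier (Metric.cthickening ε F) ∩
        Metric.cthickening ε (wordMap S ω '' F)) := measure_biUnion_finset_le _ _
    _ ≤ hΩfin.toFinset.card • (C * ENNReal.ofReal (ε^(d-1))) :=
        Finset.sum_le_card_nsmul _ _ _ hpiece
    _ = (hΩfin.toFinset.card : ℝ≥0∞) * C * ENNReal.ofReal (ε^(d-1)) := by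
        rw [nsmul_eq_mul, mul_assoc]
    _ ≤ ENNReal.ofReal ((C.toReal + 1) * (Ω.ncard : ℝ) * ε ^ ((d:ℝ) - 1)) := by
        rw [hεpow]
        have h1 : (hΩfin.toFinset.card : ℝ≥0∞) = ENNReal.ofReal (Ω.ncard : ℝ) := by
          rw [← hcard, ENNReal.ofReal_natCast]
        rw [h1]
        rw [ENNReal.ofReal_mul (by positivity), ENNReal.ofReal_mul (by positivity)]
        calc ENNReal.ofReal (Ω.ncard : ℝ) * C * ENNReal.ofReal (ε^(d-1)) =
            C * ENNReal.ofReal (Ω.ncard : ℝ) * ENNReal.ofReal (ε^(d-1)) := by ring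
          _ ≤ ENNReal.ofReal (C.toReal + 1) * ENNReal.ofReal (Ω.ncard : ℝ) *
              ENNReal.ofReal (ε^(d-1)) := by
            apply mul_le_mul_left (mul_le_mul_left hCle _) _
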